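/- arXiv:2308.15520 — 6 statements merged into one kernel-verified Lean document; each statement's English description precedes it below -/
import Mathlib

section
/- Let H1 be an r1×n1 matrix and H2 an r2×n2 matrix over GF(2). Define H_X = (H1 ⊗ I_{n2} , I_{r1} ⊗ H2ᵀ) and H_Z = (I_{n1} ⊗ H2 , H1ᵀ ⊗ I_{r2}) as block matrices acting on GF(2)^{n1·n2} ⊕ GF(2)^{r1·r2}. Then H_X · H_Zᵀ = 0. -/
open Matrix Kronecker

/-- CSS commutation condition for hypergraph product codes: `H_X * H_Zᵀ = 0`. -/
theorem hgp_css_commute (r1 n1 r2 n2 : ℕ)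
    (H1 : Matrix (Fin r1) (Fin n1) (ZMod 2))
    (H2 : Matrix (Fin r2) (Fin n2) (ZMod 2)) :
    (Matrix.fromCols (H1 ⊗ₖ (1 : Matrix (Fin n2) (Fin n2) (ZMod 2)))
        ((1 : Matrix (Fin r1) (Fin r1) (ZMod 2)) ⊗ₖ H2ᵀ)) *
      (Matrix.fromCols ((1 : Matrix (Fin n1) (Fin n1) (ZMod 2)) ⊗ₖ H2)
        (H1ᵀ ⊗ₖ (1 : Matrix (Fin r2) (Fin r2) (ZMod 2))))ᵀ = 0 := by
  rw [transpose_fromCols, fromCols_mul_fromRows,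
    ← kroneckerMap_transpose, ← kroneckerMap_transpose,
    transpose_one, transpose_one, transpose_transpose,
    ← mul_kronecker_mul, ← mul_kronecker_mul, Matrix.one_mul, Matrix.mul_one, Matrix.one_mul, Matrix.mul_one]
  ext i j
  simp [CharTwo.add_self_eq_zero]
end

section
/- Let H1, H2 be matrices over GF(2) of sizes r1×n1 and r2×n2. Let x1,...,x_{k1} be a basis of ker H1 and y1,...,y_{k2} standard basis vectors of GF(2)^{n2} such that no nonzero combination of the y_j lies in Im(H2ᵀ). Suppose a vector z = (∑_{ij} λ_{ij} x_i ⊗ y_j, 0) lies in the image of H_Zᵀ, where H_Z = (I_{n1} ⊗ H2 , H1ᵀ ⊗ I_{r2}). Then all λ_{ij} = 0. -/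
open Matrix Kronecker

/-- Kronecker product of vectors. -/
def vecKron {m n : Type*} (x : m → ZMod 2) (y : n → ZMod 2) : m × n → ZMod 2 :=
  fun p => x p.1 * y p.2

/-- The first class of logical Z operators is linearly independent modulo Z-stabilizers. -/
theorem hgp_first_logicals_independent (r1 n1 r2 n2 k1 k2 : ℕ)
    (H1 : Matrix (Fin r1) (Fin n1) (ZMod 2))
    (H2 : Matrix (Fin r2) (Fin n2) (ZMod 2))
    (x : Fin k1 → Fin n1 → ZMod 2)
    (hxind : LinearIndependent (ZMod 2) x)
    (hxspan : Submodule.span (ZMod 2) (Set.range x) = LinearMap.ker H1.mulVecLin)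
    (y : Fin k2 → Fin n2 → ZMod 2)
    (hyunit : ∀ j, ∃ i : Fin n2, y j = Pi.single i (1 : ZMod 2))
    (hy : ∀ c : Fin k2 → ZMod 2,
      (∑ j, c j • y j) ∈ LinearMap.range H2ᵀ.mulVecLin → c = 0)
    (lam : Fin k1 → Fin k2 → ZMod 2)
    (hz : (Sum.elim (∑ i, ∑ j, lam i j • vecKron (x i) (y j))
            (0 : Fin r1 × Fin r2 → ZMod 2)) ∈
          LinearMap.range
            (Matrix.fromCols ((1 : Matrix (Fin n1) (Fin n1) (ZMod 2)) ⊗ₖ H2)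
              (H1ᵀ ⊗ₖ (1 : Matrix (Fin r2) (Fin r2) (ZMod 2))))ᵀ.mulVecLin) :
    lam = 0 := by
  obtain ⟨v, hv⟩ := hz
  rw [Matrix.mulVecLin_apply, Matrix.transpose_fromCols, Matrix.fromRows_mulVec] at hv
  -- first block equation
  have hv1 : ∀ a b, (∑ c, H2 c b * v (a, c)) =
      ∑ i, ∑ j, lam i j * (x i a * y j b) := by
    intro a b
    have h := congrFun hv (Sum.inl (a, b))
    simp only [Sum.elim_inl, Matrix.mulVec, dotProduct, Matrix.transpose_apply,
      Matrix.kroneckerMap_apply, Fintype.sum_prod_type, Matrix.one_apply,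
      Finset.sum_apply, Pi.smul_apply, vecKron, smul_eq_mul] at h
    simpa [ite_mul, Finset.sum_ite_eq] using h
  -- second block equation: each column of v lies in ker H1
  have hv2 : ∀ c : Fin r2, H1.mulVecLin (fun a => v (a, c)) = 0 := by
    intro c
    funext r
    have h := congrFun hv (Sum.inr (r, c))
    simp only [Sum.elim_inr, Matrix.mulVec, dotProduct, Matrix.transpose_apply,
      Matrix.kroneckerMap_apply, Fintype.sum_prod_type, Matrix.one_apply,
      Pi.zero_apply] at h
    simpa [Matrix.mulVecLin_apply, Matrix.mulVec, dotProduct, mul_ite,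
      Finset.sum_ite_eq] using h
  -- express columns of v in terms of x
  have hcol : ∀ c : Fin r2, ∃ mu : Fin k1 → ZMod 2,
      ∑ i, mu i • x i = fun a => v (a, c) := by
    intro c
    rw [← Submodule.mem_span_range_iff_exists_fun, hxspan, LinearMap.mem_ker]
    exact hv2 c
  choose mu hmu using hcol
  -- key identity for each b
  have hkey : ∀ i, ∀ b, (∑ c, H2 c b * mu c i) = ∑ j, lam i j * y j b := by
    intro i b
    have hli := Fintype.linearIndependent_iff.mp hxind
      (fun i => (∑ c, H2 c b * mu c i) - ∑ j, lam i j * y j b)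
    have hsum : ∑ i, ((∑ c, H2 c b * mu c i) - ∑ j, lam i j * y j b) • x i = 0 := by
      funext a
      have h1 := hv1 a b
      have h2 : ∀ c, v (a, c) = ∑ i, mu c i * x i a := by
        intro c
        have := congrFun (hmu c) a
        simpa [Finset.sum_apply] using this.symm
      simp only [h2] at h1
      have hr : ∑ i, (∑ j, lam i j * y j b) * x i a = ∑ i, ∑ j, lam i j * (x i a * y j b) := by
        congr 1; funext i
        rw [Finset.sum_mul]
        congr 1; funext j; ring
      have : ∑ i, (∑ c, H2 c b * mu c i) * x i a = ∑ i, (∑ j, lam i j * y j b) * x i a := by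
        rw [hr, ← h1]
        simp only [Finset.sum_mul, Finset.mul_sum]
        rw [Finset.sum_comm]
        refine Finset.sum_congr rfl fun c _ => Finset.sum_congr rfl fun i _ => by ring
      simp only [Finset.sum_apply, Pi.smul_apply, smul_eq_mul, Pi.zero_apply, sub_mul,
        Finset.sum_sub_distrib]
      rw [this, hr]
      simp
    have := hli hsum i
    exact sub_eq_zero.mp this
  -- conclude
  funext i
  apply hy
  refine ⟨fun c => mu c i, ?_⟩
  funext b
  have := hkey i b
  simp only [Matrix.mulVecLin_apply, Matrix.mulVec, dotProduct, Matrix.transpose_apply,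
    Finset.sum_apply, Pi.smul_apply, smul_eq_mul]
  rw [this]
end

section
/- Let H1, H2 be matrices over GF(2) with ker H1 having minimum (Hamming) weight ≥ d1 among nonzero elements. Let z = (z1, z2) be a logical Z operator of the hypergraph product code of the form z1 = ∑_j x_j' ⊗ y_j + ∑_k w_k ⊗ H2ᵀ w̃_k and z2 = ∑_ℓ a_ℓ ⊗ b_ℓ' + ∑_k H1 w_k ⊗ w̃_k, where each x_j' ∈ ker H1, the y_j are unit vectors no nonzero combination of which lies in Im(H2ᵀ), and at least one x_j' ≠ 0. Then there exist at least d1 distinct indices t ∈ {1,...,n1} such that the restriction of z1 to row t, namely (e_tᵀ ⊗ I_{n2}) z1, is nonzero. -/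
open Matrix Kronecker

/-- Key lemma for distance robustness: if some `x' j ≠ 0`, the bit-type part `z1`
of a logical Z operator has nonzero support in at least `d1` distinct rows. -/
theorem hgp_logical_row_support (r1 n1 r2 n2 k K k' d1 : ℕ)
    (H1 : Matrix (Fin r1) (Fin n1) (ZMod 2))
    (H2 : Matrix (Fin r2) (Fin n2) (ZMod 2))
    (hd1 : ∀ v : Fin n1 → ZMod 2, H1.mulVec v = 0 → v ≠ 0 → d1 ≤ hammingNorm v)
    (x' : Fin k → Fin n1 → ZMod 2) (hx' : ∀ j, H1.mulVec (x' j) = 0)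
    (y : Fin k → Fin n2 → ZMod 2)
    (hyunit : ∀ j, ∃ i : Fin n2, y j = Pi.single i (1 : ZMod 2))
    (hy : ∀ c : Fin k → ZMod 2,
      (∑ j, c j • y j) ∈ LinearMap.range H2ᵀ.mulVecLin → c = 0)
    (w : Fin K → Fin n1 → ZMod 2) (wt : Fin K → Fin r2 → ZMod 2)
    (a : Fin k' → Fin r1 → ZMod 2) (b' : Fin k' → Fin r2 → ZMod 2)
    (z1 : Fin n1 × Fin n2 → ZMod 2)
    (hz1 : z1 = ∑ j, vecKron (x' j) (y j) + ∑ i, vecKron (w i) (H2ᵀ.mulVec (wt i)))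
    (z2 : Fin r1 × Fin r2 → ZMod 2)
    (hz2 : z2 = ∑ l, vecKron (a l) (b' l) + ∑ i, vecKron (H1.mulVec (w i)) (wt i))
    (hne : ∃ j, x' j ≠ 0) :
    d1 ≤ {t : Fin n1 | (fun s => z1 (t, s)) ≠ 0}.ncard := by
  obtain ⟨j0, hj0⟩ := hne
  have hsub : {t : Fin n1 | x' j0 t ≠ 0} ⊆ {t : Fin n1 | (fun s => z1 (t, s)) ≠ 0} := by
    intro t ht
    simp only [Set.mem_setOf_eq] at ht ⊢
    intro hrow
    have hc : (fun j => x' j t) = 0 := by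
      apply hy
      refine ⟨∑ i, w i t • wt i, ?_⟩
      have hmap : H2ᵀ.mulVecLin (∑ i, w i t • wt i)
          = ∑ i, w i t • H2ᵀ.mulVecLin (wt i) := by
        rw [map_sum]
        simp
      rw [hmap]
      funext s
      have hs := congrFun hrow s
      simp only [hz1, Pi.add_apply, Finset.sum_apply, vecKron, Pi.zero_apply] at hs
      have h2 : (∑ j, x' j t * y j s) + (∑ i, w i t * H2ᵀ.mulVec (wt i) s) = 0 := hs
      have hchar : ∀ u v : ZMod 2, u + v = 0 → v = u := by decide
      have := hchar _ _ h2
      simp only [Finset.sum_apply, Pi.smul_apply, Matrix.mulVecLin_apply, smul_eq_mul]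
      rw [this]
    exact ht (congrFun hc j0)
  have heq : {t : Fin n1 | x' j0 t ≠ 0}
      = ↑(Finset.univ.filter (fun t => x' j0 t ≠ 0)) := by
    ext t; simp
  have hcard : {t : Fin n1 | x' j0 t ≠ 0}.ncard = hammingNorm (x' j0) := by
    rw [heq, Set.ncard_coe_finset]; rfl
  calc d1 ≤ hammingNorm (x' j0) := hd1 _ (hx' j0) hj0
    _ = {t : Fin n1 | x' j0 t ≠ 0}.ncard := hcard.symm
    _ ≤ _ := Set.ncard_le_ncard hsub (Set.toFinite _)
end

section
/- Let H1, H2 be matrices over GF(2). Suppose every nonzero element of ker H1 has Hamming weight ≥ d1, every nonzero element of ker H2 has weight ≥ d2, every nonzero element of ker H1ᵀ has weight ≥ d1ᵀ, and every nonzero element of ker H2ᵀ has weight ≥ d2ᵀ. Then every vector z ∈ ker H_X \\ Im H_Zᵀ has Hamming weight ≥ min(d1, d2ᵀ) on its support, where H_X = (H1 ⊗ I_{n2}, I_{r1} ⊗ H2ᵀ) and H_Z = (I_{n1} ⊗ H2, H1ᵀ ⊗ I_{r2}). -/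
open Matrix Kronecker Finset

set_option linter.unusedSectionVars false
set_option linter.unusedVariables false

section helpers

variable {K : Type*} [Field K] [DecidableEq K]

/-- Existence of a complement contained in `S` when `T ⊔ S = ⊤`. -/
lemma exists_isCompl_le {V : Type*} [AddCommGroup V] [Module K V]
    (T S : Submodule K V) (h : T ⊔ S = ⊤) :
    ∃ U : Submodule K V, U ≤ S ∧ IsCompl T U := by
  obtain ⟨q, hq⟩ := Submodule.exists_isCompl ((T ⊓ S).comap S.subtype)
  refine ⟨q.map S.subtype, Submodule.map_subtype_le _ _, ?_, ?_⟩
  · rw [Submodule.disjoint_def]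
    rintro x hxT ⟨y, hyq, rfl⟩
    have hyp : y ∈ (T ⊓ S).comap S.subtype := by
      simp only [Submodule.mem_comap, Submodule.subtype_apply, Submodule.mem_inf]
      exact ⟨hxT, y.2⟩
    have : y ∈ ((T ⊓ S).comap S.subtype) ⊓ q := ⟨hyp, hyq⟩
    rw [hq.inf_eq_bot] at this
    simp only [Submodule.mem_bot] at this
    simp [this]
  · rw [codisjoint_iff, eq_top_iff]
    intro x _
    have hx : x ∈ T ⊔ S := by rw [h]; trivial
    obtain ⟨t, ht, s, hs, rfl⟩ := Submodule.mem_sup.mp hx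
    have hsq : (⟨s, hs⟩ : S) ∈ ((T ⊓ S).comap S.subtype) ⊔ q := by
      rw [hq.sup_eq_top]; trivial
    obtain ⟨a, ha, b, hb, hab⟩ := Submodule.mem_sup.mp hsq
    have hs' : (a : V) + (b : V) = s := by
      have := congrArg (Subtype.val) hab
      simpa using this
    have haT : (a : V) ∈ T := (Submodule.mem_comap.mp ha).1
    rw [← hs']
    exact Submodule.add_mem _ (Submodule.mem_sup_left ht)
      (Submodule.add_mem _ (Submodule.mem_sup_left haT)
        (Submodule.mem_sup_right ⟨b, hb, rfl⟩))

/-- Abstract factorization lemma. -/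
lemma exists_factor {V1 V2 W1 W2 : Type*}
    [AddCommGroup V1] [Module K V1] [AddCommGroup V2] [Module K V2]
    [AddCommGroup W1] [Module K W1] [AddCommGroup W2] [Module K W2]
    (α : V2 →ₗ[K] V1) (β : W2 →ₗ[K] W1) (h1 : V1 →ₗ[K] W1) (h2 : V2 →ₗ[K] W2)
    (hcomm : h1.comp α = β.comp h2)
    (hinj : LinearMap.ker h1 ⊓ LinearMap.range α = ⊥)
    (hsup : LinearMap.range h2 ⊔ LinearMap.ker β = ⊤) :
    ∃ ω : W2 →ₗ[K] V1, ω.comp h2 = α ∧ h1.comp ω = β := by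
  have hker : LinearMap.ker h2 ≤ LinearMap.ker α := by
    intro x hx
    have h1ax : h1 (α x) = 0 := by
      have := LinearMap.congr_fun hcomm x
      simp only [LinearMap.comp_apply] at this
      rw [this, LinearMap.mem_ker.mp hx, map_zero]
    have : α x ∈ LinearMap.ker h1 ⊓ LinearMap.range α :=
      ⟨LinearMap.mem_ker.mpr h1ax, ⟨x, rfl⟩⟩
    rw [hinj, Submodule.mem_bot] at this
    exact LinearMap.mem_ker.mpr this
  obtain ⟨U, hUle, hcompl⟩ := exists_isCompl_le (LinearMap.range h2) (LinearMap.ker β) hsup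
  set ω₀ : LinearMap.range h2 →ₗ[K] V1 :=
    ((LinearMap.ker h2).liftQ α hker).comp h2.quotKerEquivRange.symm.toLinearMap with hω₀
  have hω₀app : ∀ x : V2, ω₀ ⟨h2 x, ⟨x, rfl⟩⟩ = α x := by
    intro x
    rw [hω₀]
    simp only [LinearMap.comp_apply, LinearEquiv.coe_coe,
      LinearMap.quotKerEquivRange_symm_apply_image, Submodule.mkQ_apply, Submodule.liftQ_apply]
    erw [LinearMap.quotKerEquivRange_symm_apply_image]
    rfl
  set ω : W2 →ₗ[K] V1 :=
    ω₀.comp (Submodule.projectionOnto _ _ hcompl) with hω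
  refine ⟨ω, ?_, ?_⟩
  · ext x
    have hproj : Submodule.projectionOnto _ _ hcompl (h2 x) = ⟨h2 x, ⟨x, rfl⟩⟩ :=
      Submodule.projectionOnto_apply_left hcompl ⟨h2 x, ⟨x, rfl⟩⟩
    simp only [hω, LinearMap.comp_apply, hproj, hω₀app]
  · ext y
    simp only [hω, LinearMap.comp_apply]
    set p := Submodule.projectionOnto _ _ hcompl y with hp
    set q := Submodule.projectionOnto _ _ hcompl.symm y with hqdef
    have hdecomp : (p : W2) + (q : W2) = y :=
      Submodule.projection_add_projection_eq_self hcompl y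
    obtain ⟨x, hx⟩ := p.2
    have hω₀p : ω₀ p = α x := by
      have : p = ⟨h2 x, ⟨x, rfl⟩⟩ := Subtype.ext hx.symm
      rw [this, hω₀app]
    rw [hω₀p]
    have h1' : h1 (α x) = β (h2 x) := by
      have := LinearMap.congr_fun hcomm x
      simpa using this
    have hβq : β (q : W2) = 0 := LinearMap.mem_ker.mp (hUle q.2)
    rw [h1', hx]
    conv_rhs => rw [← hdecomp]
    rw [map_add, hβq, add_zero]

/-- Duality: a vector orthogonal to `ker B` is in the row space of `B`. -/
lemma mem_range_transpose_of_perp_ker {m n : Type*} [Fintype m] [Fintype n]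
    (B : Matrix m n K) (c : n → K)
    (hc : ∀ k : n → K, B.mulVec k = 0 → c ⬝ᵥ k = 0) :
    ∃ u : m → K, Bᵀ.mulVec u = c := by
  classical
  set f := B.mulVecLin with hf
  have hγmem : (∃ γ : Module.Dual K (n → K), (∀ x, γ x = c ⬝ᵥ x)) := by
    refine ⟨{ toFun := fun x => c ⬝ᵥ x, map_add' := ?_, map_smul' := ?_ }, fun x => rfl⟩
    · intro a b; simp [dotProduct_add]
    · intro r a; simp [dotProduct_smul]
  obtain ⟨γ, hγ⟩ := hγmem
  have hmem : γ ∈ Submodule.dualAnnihilator (LinearMap.ker f) := by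
    rw [Submodule.mem_dualAnnihilator]
    intro w hw
    rw [hγ]
    exact hc w (LinearMap.mem_ker.mp hw)
  rw [← LinearMap.range_dualMap_eq_dualAnnihilator_ker] at hmem
  obtain ⟨δ, hδ⟩ := hmem
  refine ⟨fun r => δ (Pi.single r 1), ?_⟩
  funext j
  have h1 : γ (Pi.single j 1) = c j := by rw [hγ]; simp
  have h2 : γ (Pi.single j 1) = δ (B.mulVec (Pi.single j 1)) := by
    rw [← hδ]; rfl
  have h3 : δ (B.mulVec (Pi.single j 1)) = ∑ r, B r j * δ (Pi.single r 1) := by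
    rw [LinearMap.pi_apply_eq_sum_univ δ (B.mulVec (Pi.single j 1))]
    refine Finset.sum_congr rfl fun r _ => ?_
    have : B.mulVec (Pi.single j 1) r = B r j := by simp
    rw [this, smul_eq_mul]
    congr 1
    congr 1
    funext j'
    simp [Pi.single_apply, eq_comm]
  rw [Matrix.mulVec, dotProduct]
  rw [← h1, h2, h3]
  rfl

end helpers

section weights

variable {K : Type*} [Field K] [DecidableEq K]

lemma hn_inl_le {γ1 γ2 : Type*} [Fintype γ1] [Fintype γ2] (z : γ1 ⊕ γ2 → K) :
    hammingNorm (fun p => z (Sum.inl p)) ≤ hammingNorm z := by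
  apply Finset.card_le_card_of_injOn Sum.inl
  · intro p hp
    simp only [Finset.coe_filter, Set.mem_setOf_eq, Finset.mem_filter, Finset.mem_univ, true_and] at hp ⊢
    exact hp
  · intro a _ b _ h; exact Sum.inl.inj h

lemma hn_inr_le {γ1 γ2 : Type*} [Fintype γ1] [Fintype γ2] (z : γ1 ⊕ γ2 → K) :
    hammingNorm (fun p => z (Sum.inr p)) ≤ hammingNorm z := by
  apply Finset.card_le_card_of_injOn Sum.inr
  · intro p hp
    simp only [Finset.coe_filter, Set.mem_setOf_eq, Finset.mem_filter, Finset.mem_univ, true_and] at hp ⊢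
    exact hp
  · intro a _ b _ h; exact Sum.inr.inj h

lemma hn_mulVec_le {a b : Type*} [Fintype a] [Fintype b] [DecidableEq a] [DecidableEq b]
    (M : Matrix a b K) (x : b → K) :
    hammingNorm (M.mulVec x) ≤ hammingNorm (fun p : a × b => M p.1 p.2) := by
  classical
  rcases isEmpty_or_nonempty b with hb | hb
  · have : M.mulVec x = 0 := by
      funext i; simp [Matrix.mulVec, dotProduct]
    rw [this]
    simp [hammingNorm]
  · apply Finset.card_le_card_of_injOn
      (fun i => (i, if h : ∃ j, M i j ≠ 0 then h.choose else Classical.arbitrary b))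
    · intro i hi
      simp only [Finset.coe_filter, Set.mem_setOf_eq, Finset.mem_filter, Finset.mem_univ, true_and] at hi ⊢
      have hex : ∃ j, M i j ≠ 0 := by
        by_contra hno
        push_neg at hno
        apply hi
        simp only [Matrix.mulVec, dotProduct]
        exact Finset.sum_eq_zero fun j _ => by rw [hno j, zero_mul]
      rw [dif_pos hex]
      exact hex.choose_spec
    · intro i _ i' _ h
      exact congrArg Prod.fst h

lemma hn_transpose {a b : Type*} [Fintype a] [Fintype b]
    (M : Matrix a b K) :
    hammingNorm (fun p : b × a => Mᵀ p.1 p.2) = hammingNorm (fun p : a × b => M p.1 p.2) := by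
  apply Finset.card_bij' (fun p _ => (p.2, p.1)) (fun p _ => (p.2, p.1)) <;>
    simp [Matrix.transpose_apply, Finset.mem_filter]
  · intro x y h; exact (Finset.mem_filter.mp h).2
  · intro x y h; exact Finset.mem_filter.mpr ⟨Finset.mem_univ _, h⟩

end weights

section kron

variable {K : Type*} [Field K]

lemma kron_one_mulVec {a b c : Type*} [Fintype a] [Fintype b] [Fintype c] [DecidableEq c]
    (M : Matrix a b K) (v : b × c → K) (p : a × c) :
    (M ⊗ₖ (1 : Matrix c c K)).mulVec v p = ∑ i, M p.1 i * v (i, p.2) := by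
  simp only [Matrix.mulVec, dotProduct, Fintype.sum_prod_type, kroneckerMap_apply,
    Matrix.one_apply, mul_ite, mul_one, mul_zero, ite_mul, zero_mul]
  refine Finset.sum_congr rfl fun i _ => ?_
  rw [Finset.sum_ite_eq Finset.univ p.2 (fun j => M p.1 i * v (i, j))]
  simp

lemma one_kron_mulVec {a b c : Type*} [Fintype a] [Fintype b] [Fintype c] [DecidableEq a]
    (M : Matrix b c K) (v : a × c → K) (p : a × b) :
    ((1 : Matrix a a K) ⊗ₖ M).mulVec v p = ∑ j, M p.2 j * v (p.1, j) := by
  simp only [Matrix.mulVec, dotProduct, Fintype.sum_prod_type, kroneckerMap_apply,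
    Matrix.one_apply, mul_ite, mul_one, mul_zero, ite_mul, zero_mul, one_mul]
  rw [show (∑ x : a, ∑ j : c, if p.1 = x then M p.2 j * v (x, j) else 0)
      = ∑ x : a, if p.1 = x then ∑ j : c, M p.2 j * v (x, j) else 0 from
    Finset.sum_congr rfl fun x _ => by split <;> simp]
  rw [Finset.sum_ite_eq Finset.univ p.1 (fun i => ∑ j, M p.2 j * v (i, j))]
  simp

end kron


/-- Distance of the hypergraph product code: every logical Z operator
(`z ∈ ker H_X \ Im H_Zᵀ`) has Hamming weight at least `min d1 d2ᵀ`. -/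
theorem hgp_distance (r1 n1 r2 n2 d1 d2 d1T d2T : ℕ)
    (H1 : Matrix (Fin r1) (Fin n1) (ZMod 2))
    (H2 : Matrix (Fin r2) (Fin n2) (ZMod 2))
    (hd1 : ∀ v : Fin n1 → ZMod 2, H1.mulVec v = 0 → v ≠ 0 → d1 ≤ hammingNorm v)
    (hd2 : ∀ v : Fin n2 → ZMod 2, H2.mulVec v = 0 → v ≠ 0 → d2 ≤ hammingNorm v)
    (hd1T : ∀ v : Fin r1 → ZMod 2, H1ᵀ.mulVec v = 0 → v ≠ 0 → d1T ≤ hammingNorm v)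
    (hd2T : ∀ v : Fin r2 → ZMod 2, H2ᵀ.mulVec v = 0 → v ≠ 0 → d2T ≤ hammingNorm v)
    (hker1 : ∃ v : Fin n1 → ZMod 2, v ≠ 0 ∧ H1.mulVec v = 0)
    (hker2T : ∃ v : Fin r2 → ZMod 2, v ≠ 0 ∧ H2ᵀ.mulVec v = 0)
    (z : (Fin n1 × Fin n2) ⊕ (Fin r1 × Fin r2) → ZMod 2)
    (hzker : (Matrix.fromCols (H1 ⊗ₖ (1 : Matrix (Fin n2) (Fin n2) (ZMod 2)))
        ((1 : Matrix (Fin r1) (Fin r1) (ZMod 2)) ⊗ₖ H2ᵀ)).mulVec z = 0)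
    (hznotim : ∀ w : Fin n1 × Fin r2 → ZMod 2,
      (Matrix.fromCols ((1 : Matrix (Fin n1) (Fin n1) (ZMod 2)) ⊗ₖ H2)
        (H1ᵀ ⊗ₖ (1 : Matrix (Fin r2) (Fin r2) (ZMod 2))))ᵀ.mulVec w ≠ z) :
    min d1 d2T ≤ hammingNorm z := by
  classical
  by_contra hlt
  push_neg at hlt
  set A : Matrix (Fin n1) (Fin n2) (ZMod 2) := Matrix.of fun i j => z (Sum.inl (i, j)) with hAdef
  set B : Matrix (Fin r1) (Fin r2) (ZMod 2) := Matrix.of fun r s => z (Sum.inr (r, s)) with hBdef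
  have hz : z = Sum.elim (fun p : Fin n1 × Fin n2 => A p.1 p.2)
      (fun p : Fin r1 × Fin r2 => B p.1 p.2) := by
    funext p
    rcases p with ⟨i, j⟩ | ⟨r, s⟩ <;> rfl
  -- weight bounds
  have hwA : hammingNorm (fun p : Fin n1 × Fin n2 => A p.1 p.2) ≤ hammingNorm z := by
    have h := hn_inl_le z
    have he : (fun p : Fin n1 × Fin n2 => A p.1 p.2) = fun p => z (Sum.inl p) := rfl
    rw [he]; exact h
  have hwB : hammingNorm (fun p : Fin r1 × Fin r2 => B p.1 p.2) ≤ hammingNorm z := by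
    have h := hn_inr_le z
    have he : (fun p : Fin r1 × Fin r2 => B p.1 p.2) = fun p => z (Sum.inr p) := rfl
    rw [he]; exact h
  -- the matrix equation
  rw [hz, Matrix.fromCols_mulVec_sumElim] at hzker
  have hfac : H1 * A = B * H2 := by
    ext i j
    have h := congrFun hzker (i, j)
    rw [Pi.add_apply, kron_one_mulVec, one_kron_mulVec, Pi.zero_apply] at h
    have h1 : (H1 * A) i j = ∑ i', H1 i i' * A i' j := by rw [Matrix.mul_apply]
    have h2 : (B * H2) i j = ∑ s, H2ᵀ j s * B i s := by
      rw [Matrix.mul_apply]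
      exact Finset.sum_congr rfl fun s _ => by rw [Matrix.transpose_apply, mul_comm]
    rw [h1, h2]
    have := eq_neg_of_add_eq_zero_left h
    rw [this, CharTwo.neg_eq]
  have hcomm : H1.mulVecLin ∘ₗ A.mulVecLin = B.mulVecLin ∘ₗ H2.mulVecLin := by
    rw [← Matrix.mulVecLin_mul, ← Matrix.mulVecLin_mul, hfac]
  have hinj : LinearMap.ker H1.mulVecLin ⊓ LinearMap.range A.mulVecLin = ⊥ := by
    rw [eq_bot_iff]
    rintro v ⟨hv1, x, rfl⟩
    rw [Submodule.mem_bot]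
    by_contra hne
    have hker : H1.mulVec (A.mulVecLin x) = 0 := hv1
    have hd := hd1 (A.mulVecLin x) hker hne
    have hle : hammingNorm (A.mulVecLin x) ≤ hammingNorm (fun p : Fin n1 × Fin n2 => A p.1 p.2) :=
      hn_mulVec_le A x
    omega
  have hsup : LinearMap.range H2.mulVecLin ⊔ LinearMap.ker B.mulVecLin = ⊤ := by
    by_contra hne
    obtain ⟨φ, hφne, hφbot⟩ :=
      Submodule.exists_dual_map_eq_bot_of_lt_top (lt_top_iff_ne_top.mpr hne) inferInstance
    set c : Fin r2 → ZMod 2 := fun s => φ (fun j => if s = j then 1 else 0) with hcdef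
    have hφeq : ∀ x, φ x = ∑ s, x s * c s := by
      intro x
      rw [LinearMap.pi_apply_eq_sum_univ φ x]
      exact Finset.sum_congr rfl fun s _ => by rw [smul_eq_mul]
    have hφV : ∀ x, x ∈ (LinearMap.range H2.mulVecLin ⊔ LinearMap.ker B.mulVecLin :
        Submodule (ZMod 2) (Fin r2 → ZMod 2)) → φ x = 0 := by
      intro x hx
      have hmem : φ x ∈ Submodule.map φ
          (LinearMap.range H2.mulVecLin ⊔ LinearMap.ker B.mulVecLin) := ⟨x, hx, rfl⟩
      rw [hφbot, Submodule.mem_bot] at hmem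
      exact hmem
    have hcker : H2ᵀ.mulVec c = 0 := by
      funext j
      have hmem : H2.mulVec (Pi.single j 1) ∈
          (LinearMap.range H2.mulVecLin ⊔ LinearMap.ker B.mulVecLin :
            Submodule (ZMod 2) (Fin r2 → ZMod 2)) :=
        Submodule.mem_sup_left ⟨Pi.single j 1, rfl⟩
      have h0 := hφV _ hmem
      rw [hφeq] at h0
      simp only [Matrix.mulVec_single_one, Matrix.col_apply, mul_one] at h0
      rw [Pi.zero_apply]
      simp only [Matrix.mulVec, dotProduct, Matrix.transpose_apply]
      exact h0
    have hcperp : ∀ k, B.mulVec k = 0 → c ⬝ᵥ k = 0 := by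
      intro k hk
      have hmem : k ∈ (LinearMap.range H2.mulVecLin ⊔ LinearMap.ker B.mulVecLin :
          Submodule (ZMod 2) (Fin r2 → ZMod 2)) :=
        Submodule.mem_sup_right (LinearMap.mem_ker.mpr hk)
      have h0 := hφV _ hmem
      rw [hφeq] at h0
      rw [dotProduct]
      rw [show ∑ s, c s * k s = ∑ s, k s * c s from
        Finset.sum_congr rfl fun s _ => mul_comm _ _]
      exact h0
    obtain ⟨u, hu⟩ := mem_range_transpose_of_perp_ker B c hcperp
    have hcle : hammingNorm c ≤ hammingNorm (fun p : Fin r1 × Fin r2 => B p.1 p.2) := by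
      rw [← hu]
      calc hammingNorm (Bᵀ.mulVec u)
          ≤ hammingNorm (fun p : Fin r2 × Fin r1 => Bᵀ p.1 p.2) := hn_mulVec_le Bᵀ u
        _ = hammingNorm (fun p : Fin r1 × Fin r2 => B p.1 p.2) := hn_transpose B
    have hc0 : c = 0 := by
      by_contra hne0
      have hd := hd2T c hcker hne0
      omega
    apply hφne
    apply LinearMap.ext
    intro x
    rw [hφeq, LinearMap.zero_apply]
    rw [hc0]
    simp
  obtain ⟨ω, hω1, hω2⟩ :=
    exists_factor A.mulVecLin B.mulVecLin H1.mulVecLin H2.mulVecLin hcomm hinj hsup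
  set W := LinearMap.toMatrix' ω with hWdef
  have hWapp : ∀ y, W.mulVec y = ω y := by
    intro y
    rw [hWdef, ← Matrix.toLin'_apply, Matrix.toLin'_toMatrix']
  have hAW : ∀ i j, A i j = ∑ s, H2ᵀ j s * W i s := by
    intro i j
    have h := LinearMap.congr_fun hω1 (Pi.single j 1)
    simp only [LinearMap.comp_apply, Matrix.mulVecLin_apply] at h
    rw [← hWapp] at h
    have h2 := congrFun h i
    simp only [Matrix.mulVec_single_one, Matrix.col_apply, mul_one] at h2
    rw [show (W.mulVec (H2.col j)) i = ∑ s, W i s * H2 s j from rfl] at h2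
    rw [← h2]
    exact Finset.sum_congr rfl fun s _ => by rw [Matrix.transpose_apply, mul_comm]
  have hBW : ∀ r s, B r s = ∑ i, H1 r i * W i s := by
    intro r s
    have h := LinearMap.congr_fun hω2 (Pi.single s 1)
    simp only [LinearMap.comp_apply, Matrix.mulVecLin_apply] at h
    rw [← hWapp] at h
    have h2 := congrFun h r
    simp only [Matrix.mulVec_single_one, Matrix.col_apply, mul_one] at h2
    rw [← h2]
    simp only [Matrix.mulVec, dotProduct, Matrix.col_apply]
  apply hznotim (fun p : Fin n1 × Fin r2 => W p.1 p.2)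
  rw [Matrix.transpose_fromCols, Matrix.fromRows_mulVec]
  funext p
  rcases p with ⟨i, j⟩ | ⟨r, s⟩
  · rw [Sum.elim_inl]
    rw [show ((1 : Matrix (Fin n1) (Fin n1) (ZMod 2)) ⊗ₖ H2)ᵀ
        = (1 : Matrix (Fin n1) (Fin n1) (ZMod 2)) ⊗ₖ H2ᵀ from by
      rw [← Matrix.kroneckerMap_transpose, Matrix.transpose_one]]
    rw [one_kron_mulVec]
    exact (hAW i j).symm
  · rw [Sum.elim_inr]
    rw [show (H1ᵀ ⊗ₖ (1 : Matrix (Fin r2) (Fin r2) (ZMod 2)))ᵀ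
        = H1 ⊗ₖ (1 : Matrix (Fin r2) (Fin r2) (ZMod 2)) from by
      rw [← Matrix.kroneckerMap_transpose, Matrix.transpose_one, Matrix.transpose_transpose]]
    rw [kron_one_mulVec]
    exact (hBW r s).symm
end

section
/- Let H1, H2 be GF(2) matrices with ker H1 ≠ 0 and ker H2ᵀ ≠ 0, with nonzero kernel elements of H1 having weight ≥ d1 and of H2ᵀ weight ≥ d2ᵀ. For any z ∈ ker H_X \\ Im H_Zᵀ, either there are at least d1 indices t ∈ {1,...,n1} such that the bit-type block (e_tᵀ ⊗ I_{n2}) z₁ is nonzero, or there are at least d2ᵀ indices t̃ ∈ {1,...,r2} such that the check-type block (I_{r1} ⊗ ẽ_{t̃}ᵀ) z₂ is nonzero, where z = (z₁, z₂). -/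
open Matrix Kronecker

lemma exists_dual_matrix {K : Type*} [Field K] {m n : Type*} [Fintype m] [Fintype n]
    [DecidableEq m] [DecidableEq n]
    (M : Matrix m n K) (T : Finset m)
    (hind : LinearIndependent K (fun l : T => M l)) :
    ∃ N : Matrix n m K, (∀ l ∉ T, ∀ s, N s l = 0) ∧
      ∀ l ∈ T, ∀ l' ∈ T, (M * N) l l' = if l = l' then 1 else 0 := by
  classical
  set W := Submodule.span K (Set.range fun l : T => M l) with hW
  obtain ⟨q, hq⟩ := Submodule.exists_isCompl W
  set π := W.linearProjOfIsCompl q hq with hπ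
  set b : Module.Basis T K W := Module.Basis.span hind with hb
  set N : Matrix n m K := Matrix.of fun s l =>
    if h : l ∈ T then b.coord ⟨l, h⟩ (π (Pi.single s 1)) else 0 with hN
  refine ⟨N, ?_, ?_⟩
  · intro l hl s; simp [hN, hl]
  · intro l hl l' hl'
    have hmem : M l ∈ W := by
      exact Submodule.subset_span ⟨⟨l, hl⟩, rfl⟩
    have key : (M * N) l l' = b.coord ⟨l', hl'⟩ (π (M l)) := by
      have hMl : M l = ∑ s, (M l s) • (Pi.single s (1 : K) : n → K) := by
        funext j
        rw [Finset.sum_apply]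
        simp [Pi.single_apply, eq_comm]
      rw [Matrix.mul_apply]
      conv_rhs => rw [hMl, map_sum, map_sum]
      simp only [_root_.map_smul, smul_eq_mul, hN, Matrix.of_apply, dif_pos hl']
    rw [key]
    have hπM : π (M l) = ⟨M l, hmem⟩ := Submodule.linearProjOfIsCompl_apply_left hq ⟨M l, hmem⟩
    rw [hπM]
    have hbl : (⟨M l, hmem⟩ : W) = b ⟨l, hl⟩ := by
      exact (Module.Basis.span_apply hind ⟨l, hl⟩).symm
    rw [hbl, Module.Basis.coord_apply, Module.Basis.repr_self, Finsupp.single_apply]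
    simp [Subtype.ext_iff]

/-- Row/column support lemma: any logical Z operator has support in at least `d1`
distinct bit-type rows or at least `d2ᵀ` distinct check-type columns. -/
theorem hgp_row_column_support (r1 n1 r2 n2 d1 d2T : ℕ)
    (H1 : Matrix (Fin r1) (Fin n1) (ZMod 2))
    (H2 : Matrix (Fin r2) (Fin n2) (ZMod 2))
    (hker1 : ∃ v : Fin n1 → ZMod 2, v ≠ 0 ∧ H1.mulVec v = 0)
    (hker2T : ∃ v : Fin r2 → ZMod 2, v ≠ 0 ∧ H2ᵀ.mulVec v = 0)
    (hd1 : ∀ v : Fin n1 → ZMod 2, H1.mulVec v = 0 → v ≠ 0 → d1 ≤ hammingNorm v)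
    (hd2T : ∀ v : Fin r2 → ZMod 2, H2ᵀ.mulVec v = 0 → v ≠ 0 → d2T ≤ hammingNorm v)
    (z : (Fin n1 × Fin n2) ⊕ (Fin r1 × Fin r2) → ZMod 2)
    (hzker : (Matrix.fromCols (H1 ⊗ₖ (1 : Matrix (Fin n2) (Fin n2) (ZMod 2)))
        ((1 : Matrix (Fin r1) (Fin r1) (ZMod 2)) ⊗ₖ H2ᵀ)).mulVec z = 0)
    (hznotim : ∀ w : Fin n1 × Fin r2 → ZMod 2,
      (Matrix.fromCols ((1 : Matrix (Fin n1) (Fin n1) (ZMod 2)) ⊗ₖ H2)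
        (H1ᵀ ⊗ₖ (1 : Matrix (Fin r2) (Fin r2) (ZMod 2))))ᵀ.mulVec w ≠ z) :
    d1 ≤ {t : Fin n1 | (fun s => z (Sum.inl (t, s))) ≠ 0}.ncard ∨
      d2T ≤ {tt : Fin r2 | (fun i => z (Sum.inr (i, tt))) ≠ 0}.ncard := by
  classical
  by_contra hcon
  push_neg at hcon
  obtain ⟨hS, hT⟩ := hcon
  set S : Finset (Fin n1) :=
    Finset.univ.filter (fun t => (fun s => z (Sum.inl (t, s))) ≠ 0) with hSdef
  set T : Finset (Fin r2) :=
    Finset.univ.filter (fun l => (fun i => z (Sum.inr (i, l))) ≠ 0) with hTdef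
  have hScard : S.card < d1 := by
    have he : {t : Fin n1 | (fun s => z (Sum.inl (t, s))) ≠ 0} = ↑S := by
      ext t; simp [hSdef]
    rw [he, Set.ncard_coe_finset] at hS
    exact hS
  have hTcard : T.card < d2T := by
    have he : {tt : Fin r2 | (fun i => z (Sum.inr (i, tt))) ≠ 0} = ↑T := by
      ext t; simp [hTdef]
    rw [he, Set.ncard_coe_finset] at hT
    exact hT
  set A : Matrix (Fin n1) (Fin n2) (ZMod 2) := Matrix.of fun t s => z (Sum.inl (t, s)) with hA
  set B : Matrix (Fin r1) (Fin r2) (ZMod 2) := Matrix.of fun i l => z (Sum.inr (i, l)) with hB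
  have hAS : ∀ t ∉ S, ∀ s, A t s = 0 := by
    intro t ht s
    simp only [hSdef, Finset.mem_filter, Finset.mem_univ, true_and, not_not] at ht
    exact congrFun ht s
  have hBT : ∀ l ∉ T, ∀ i, B i l = 0 := by
    intro l hl i
    simp only [hTdef, Finset.mem_filter, Finset.mem_univ, true_and, not_not] at hl
    exact congrFun hl i
  -- the key commutation relation
  have hmain0 : H1 * A + B * H2 = 0 := by
    funext i j
    have h := congrFun hzker (i, j)
    simp only [Matrix.mulVec, dotProduct, Fintype.sum_sum_type,
      Matrix.fromCols_apply_inl, Matrix.fromCols_apply_inr,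
      Matrix.kroneckerMap_apply, Matrix.one_apply, Matrix.transpose_apply,
      Fintype.sum_prod_type, mul_ite, mul_one, mul_zero, ite_mul, zero_mul,
      Finset.sum_ite_eq, Finset.sum_ite_eq', Finset.mem_univ, if_true,
      Pi.zero_apply] at h
    simpa [Matrix.add_apply, Matrix.mul_apply, mul_comm, hA, hB] using h
  have hmain : H1 * A = B * H2 := by
    funext i j
    have hij := congrFun (congrFun hmain0 i) j
    simp only [Matrix.add_apply, Matrix.zero_apply] at hij
    rw [add_eq_zero_iff_eq_neg] at hij
    rw [hij, CharTwo.neg_eq]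
  -- rows of H2 indexed by T are linearly independent
  have hind : LinearIndependent (ZMod 2) (fun l : T => H2 l) := by
    rw [Fintype.linearIndependent_iff]
    intro g hg
    set c : Fin r2 → ZMod 2 := fun l => if h : l ∈ T then g ⟨l, h⟩ else 0 with hc
    have hc0 : H2ᵀ.mulVec c = 0 := by
      funext j
      have hgj := congrFun hg j
      rw [Finset.sum_apply] at hgj
      simp only [Pi.smul_apply, smul_eq_mul, Pi.zero_apply] at hgj
      simp only [Finset.univ_eq_attach] at hgj
      simp only [Matrix.mulVec, dotProduct, Matrix.transpose_apply, Pi.zero_apply]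
      rw [← Finset.sum_subset (Finset.subset_univ T) (fun x _ hx => by simp [hc, hx])]
      rw [← Finset.sum_attach T (fun l => H2 l j * c l), ← hgj]
      apply Finset.sum_congr rfl
      intro l _
      simp [hc, l.2, mul_comm]
    have hcz : c = 0 := by
      by_contra hcne
      have h1 := hd2T c hc0 hcne
      have h2 : hammingNorm c ≤ T.card := by
        apply Finset.card_le_card
        intro l hl
        simp only [Finset.mem_filter, Finset.mem_univ, true_and] at hl
        by_contra hlT
        exact hl (by simp [hc, hlT])
      omega
    intro i
    have := congrFun hcz i.1
    simpa [hc, i.2] using this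
  obtain ⟨Km, hK0, hKdual⟩ := exists_dual_matrix H2 T hind
  set C : Matrix (Fin n1) (Fin r2) (ZMod 2) := A * Km with hC
  have hBC : H1 * C = B := by
    rw [hC, ← Matrix.mul_assoc, hmain, Matrix.mul_assoc]
    funext i l'
    rw [Matrix.mul_apply]
    by_cases hl' : l' ∈ T
    · rw [Finset.sum_eq_single l']
      · rw [hKdual l' hl' l' hl', if_pos rfl, mul_one]
      · intro b _ hbl'
        by_cases hb : b ∈ T
        · rw [hKdual b hb l' hl', if_neg hbl', mul_zero]
        · rw [hBT b hb i, zero_mul]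
      · intro h; exact absurd (Finset.mem_univ l') h
    · have hz : ∀ l, (H2 * Km) l l' = 0 := by
        intro l
        rw [Matrix.mul_apply]
        apply Finset.sum_eq_zero
        intro s _
        rw [hK0 l' hl' s, mul_zero]
      rw [hBT l' hl' i]
      apply Finset.sum_eq_zero
      intro l _
      rw [hz l, mul_zero]
  have hCrow : ∀ t ∉ S, ∀ l, C t l = 0 := by
    intro t ht l
    rw [hC, Matrix.mul_apply]
    apply Finset.sum_eq_zero
    intro s _
    rw [hAS t ht s, zero_mul]
  have hsum0 : H1 * (A + C * H2) = 0 := by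
    rw [Matrix.mul_add, ← Matrix.mul_assoc, hBC, hmain]
    funext i j
    simp [Matrix.add_apply, CharTwo.add_self_eq_zero]
  have hAC : C * H2 = A := by
    funext t j
    set v : Fin n1 → ZMod 2 := fun t => (A + C * H2) t j with hv
    have hv0 : H1.mulVec v = 0 := by
      funext i
      have := congrFun (congrFun hsum0 i) j
      simpa [Matrix.mulVec, dotProduct, Matrix.mul_apply, hv] using this
    have hvsupp : ∀ t', v t' ≠ 0 → t' ∈ S := by
      intro t' hvt'
      by_contra htS
      apply hvt'
      have h1 : A t' j = 0 := hAS t' htS j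
      have h2 : (C * H2) t' j = 0 := by
        rw [Matrix.mul_apply]
        apply Finset.sum_eq_zero
        intro b _
        rw [hCrow t' htS b, zero_mul]
      simp [hv, Matrix.add_apply, h1, h2]
    have hveq : v = 0 := by
      by_contra hvne
      have h1 := hd1 v hv0 hvne
      have h2 : hammingNorm v ≤ S.card := by
        apply Finset.card_le_card
        intro t' ht'
        simp only [Finset.mem_filter, Finset.mem_univ, true_and] at ht'
        exact hvsupp t' ht'
      omega
    have hvt := congrFun hveq t
    simp only [hv, Matrix.add_apply, Pi.zero_apply] at hvt
    rw [add_comm, add_eq_zero_iff_eq_neg] at hvt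
    rw [hvt, CharTwo.neg_eq]
  exact hznotim (fun p => C p.1 p.2) (by
    funext q
    cases q with
    | inl p =>
      obtain ⟨t, s⟩ := p
      have h := congrFun (congrFun hAC t) s
      simp only [Matrix.mul_apply, Matrix.of_apply] at h
      simp only [Matrix.mulVec, dotProduct, Matrix.transpose_apply,
        Matrix.fromCols_apply_inl, Matrix.kroneckerMap_apply, Matrix.one_apply,
        Fintype.sum_prod_type, mul_ite, mul_one, mul_zero, ite_mul, zero_mul, one_mul,
        Finset.sum_ite_eq, Finset.sum_ite_eq', Finset.mem_univ, if_true]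
      simpa [hA, mul_comm] using h
    | inr p =>
      obtain ⟨k, l⟩ := p
      have h := congrFun (congrFun hBC k) l
      simp only [Matrix.mul_apply, Matrix.of_apply] at h
      simp only [Matrix.mulVec, dotProduct, Matrix.transpose_apply,
        Matrix.fromCols_apply_inr, Matrix.kroneckerMap_apply, Matrix.one_apply,
        Fintype.sum_prod_type, mul_ite, mul_one, mul_zero, ite_mul, zero_mul, one_mul,
        Finset.sum_ite_eq, Finset.sum_ite_eq', Finset.mem_univ, if_true]
      simpa [hB, mul_comm] using h)
end

section
/- Let H1, H2 be GF(2) matrices of sizes r1×n1, r2×n2, with k1 = dim ker H1, k2 = n2 − rank H2, k1ᵀ = r1 − rank H1, k2ᵀ = dim ker H2ᵀ. Then dim(ker H_X / Im H_Zᵀ) = k1·k2 + k1ᵀ·k2ᵀ, where H_X = (H1 ⊗ I_{n2}, I_{r1} ⊗ H2ᵀ) and H_Z = (I_{n1} ⊗ H2, H1ᵀ ⊗ I_{r2}). -/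
open Matrix LinearMap Kronecker
variable {K : Type*} [Field K]

theorem exists_ginv {K : Type*} [Field K] {m n : Type*} [Fintype m] [Fintype n]
    [DecidableEq m] [DecidableEq n] (A : Matrix m n K) :
    ∃ B : Matrix n m K, A * B * A = A := by
  set f := A.mulVecLin with hf
  obtain ⟨q, hq⟩ := Submodule.exists_isCompl (LinearMap.range f)
  obtain ⟨s, hs⟩ := f.rangeRestrict.exists_rightInverse_of_surjective
    (LinearMap.range_eq_top.mpr f.surjective_rangeRestrict)
  set h := s ∘ₗ (LinearMap.range f).linearProjOfIsCompl q hq with hh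
  refine ⟨LinearMap.toMatrix' h, ?_⟩
  have key : f ∘ₗ (h ∘ₗ f) = f := by
    refine LinearMap.ext fun x => ?_
    have h1 : (LinearMap.range f).linearProjOfIsCompl q hq (f x) = f.rangeRestrict x :=
      Submodule.linearProjOfIsCompl_apply_left hq ⟨f x, LinearMap.mem_range_self f x⟩
    have h2 : f.rangeRestrict (s (f.rangeRestrict x)) = f.rangeRestrict x := by
      have := congrFun (congrArg DFunLike.coe hs) (f.rangeRestrict x)
      exact this
    have h3 : f (s (f.rangeRestrict x)) = f x := congrArg Subtype.val h2
    simp only [LinearMap.comp_apply, hh, h1, h3]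
  have hm : (A * LinearMap.toMatrix' h * A).mulVecLin = A.mulVecLin := by
    rw [Matrix.mulVecLin_mul, Matrix.mulVecLin_mul]
    rw [show (LinearMap.toMatrix' h).mulVecLin = h from by
      rw [← Matrix.toLin'_apply']; exact Matrix.toLin'_toMatrix' h]
    exact key
  exact Matrix.toLin'.injective (by rwa [Matrix.toLin'_apply', Matrix.toLin'_apply'])


theorem finrank_range_tmap {V W V' W' : Type*} [AddCommGroup V] [AddCommGroup W]
    [AddCommGroup V'] [AddCommGroup W'] [Module K V] [Module K W] [Module K V'] [Module K W']
    [FiniteDimensional K V] [FiniteDimensional K V']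
    (f : V →ₗ[K] W) (g : V' →ₗ[K] W') :
    Module.finrank K (LinearMap.range (TensorProduct.map f g)) =
      Module.finrank K (LinearMap.range f) * Module.finrank K (LinearMap.range g) := by
  have hcomp : TensorProduct.map f g =
      (TensorProduct.map (LinearMap.range f).subtype (LinearMap.range g).subtype) ∘ₗ
        (TensorProduct.map f.rangeRestrict g.rangeRestrict) := by
    rw [← TensorProduct.map_comp]
    congr 1
  have hsurj : Function.Surjective (TensorProduct.map f.rangeRestrict g.rangeRestrict) :=
    TensorProduct.map_surjective f.surjective_rangeRestrict g.surjective_rangeRestrict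
  have hinj : Function.Injective
      (TensorProduct.map (LinearMap.range f).subtype (LinearMap.range g).subtype) := by
    have h1 : TensorProduct.map (LinearMap.range f).subtype (LinearMap.range g).subtype =
        (LinearMap.rTensor W' (LinearMap.range f).subtype) ∘ₗ
          (LinearMap.lTensor (LinearMap.range f) (LinearMap.range g).subtype) := by
      rw [← LinearMap.rTensor_comp_lTensor]
    rw [h1]
    exact (Module.Flat.rTensor_preserves_injective_linearMap _
      (Submodule.injective_subtype _)).comp
      (Module.Flat.lTensor_preserves_injective_linearMap _ (Submodule.injective_subtype _))
  rw [hcomp, LinearMap.range_comp_of_range_eq_top _ (LinearMap.range_eq_top.mpr hsurj),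
    LinearMap.finrank_range_of_inj hinj, Module.finrank_tensorProduct]


theorem rank_kron {m n p q : Type*} [Fintype m] [Fintype n] [Fintype p] [Fintype q]
    [DecidableEq m] [DecidableEq n] [DecidableEq p] [DecidableEq q]
    (A : Matrix m n K) (B : Matrix p q K) :
    (A ⊗ₖ B).rank = A.rank * B.rank := by
  have h := Matrix.rank_eq_finrank_range_toLin (A ⊗ₖ B)
    ((Pi.basisFun K m).tensorProduct (Pi.basisFun K p))
    ((Pi.basisFun K n).tensorProduct (Pi.basisFun K q))
  rw [Matrix.toLin_kronecker] at h
  simp only [Matrix.toLin_eq_toLin', Matrix.toLin'_apply'] at h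
  rw [h]; refine (finrank_range_tmap _ _).trans ?_
  rfl

theorem range_kron_inf {m n p q : Type*} [Fintype m] [Fintype n] [Fintype p] [Fintype q]
    [DecidableEq m] [DecidableEq n] [DecidableEq p] [DecidableEq q]
    (A : Matrix m n K) (B : Matrix p q K) :
    LinearMap.range (A ⊗ₖ (1 : Matrix p p K)).mulVecLin ⊓
      LinearMap.range ((1 : Matrix m m K) ⊗ₖ B).mulVecLin =
      LinearMap.range (A ⊗ₖ B).mulVecLin := by
  obtain ⟨A', hA⟩ := exists_ginv A
  obtain ⟨B', hB⟩ := exists_ginv B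
  apply le_antisymm
  · rintro x ⟨⟨u, hu⟩, v, hv⟩
    simp only [Matrix.mulVecLin_apply] at hu hv ⊢
    have hx1 : ((A * A') ⊗ₖ (1 : Matrix p p K)) *ᵥ x = x := by
      rw [← hu, Matrix.mulVec_mulVec, ← Matrix.mul_kronecker_mul, Matrix.one_mul, hA]
    have hx2 : ((1 : Matrix m m K) ⊗ₖ (B * B')) *ᵥ x = x := by
      rw [← hv, Matrix.mulVec_mulVec, ← Matrix.mul_kronecker_mul, Matrix.one_mul, hB]
    refine ⟨(A' ⊗ₖ B') *ᵥ x, ?_⟩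
    rw [Matrix.mulVecLin_apply, Matrix.mulVec_mulVec, ← Matrix.mul_kronecker_mul]
    calc ((A * A') ⊗ₖ (B * B')) *ᵥ x
        = ((A * A') ⊗ₖ (1 : Matrix p p K)) *ᵥ
            (((1 : Matrix m m K) ⊗ₖ (B * B')) *ᵥ x) := by
          rw [Matrix.mulVec_mulVec, ← Matrix.mul_kronecker_mul, Matrix.mul_one, Matrix.one_mul]
      _ = x := by rw [hx2, hx1]
  · have h1 : (A ⊗ₖ B) = (A ⊗ₖ (1 : Matrix p p K)) *
        ((1 : Matrix n n K) ⊗ₖ B) := by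
      rw [← Matrix.mul_kronecker_mul, Matrix.mul_one, Matrix.one_mul]
    have h2 : (A ⊗ₖ B) = ((1 : Matrix m m K) ⊗ₖ B) *
        (A ⊗ₖ (1 : Matrix q q K)) := by
      rw [← Matrix.mul_kronecker_mul, Matrix.mul_one, Matrix.one_mul]
    refine le_inf ?_ ?_
    · rw [h1, Matrix.mulVecLin_mul]; exact LinearMap.range_comp_le_range _ _
    · rw [h2, Matrix.mulVecLin_mul]; exact LinearMap.range_comp_le_range _ _

theorem range_fromColumns {m n p : Type*} [Fintype m] [Fintype n] [Fintype p]
    (A : Matrix m n K) (B : Matrix m p K) :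
    LinearMap.range (Matrix.fromCols A B).mulVecLin =
      LinearMap.range A.mulVecLin ⊔ LinearMap.range B.mulVecLin := by
  apply le_antisymm
  · rintro x ⟨v, rfl⟩
    rw [Matrix.mulVecLin_apply, ← Sum.elim_comp_inl_inr v, Matrix.fromCols_mulVec_sumElim]
    exact Submodule.add_mem_sup ⟨_, rfl⟩ ⟨_, rfl⟩
  · refine sup_le ?_ ?_ <;> rintro x ⟨v, rfl⟩
    · exact ⟨Sum.elim v 0, by simp [Matrix.fromCols_mulVec_sumElim]⟩
    · exact ⟨Sum.elim 0 v, by simp [Matrix.fromCols_mulVec_sumElim]⟩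

set_option maxHeartbeats 1000000 in
set_option synthInstance.maxHeartbeats 400000 in
open Kronecker in
/-- The number of logical qubits of the hypergraph product code:
`dim(ker H_X / Im H_Zᵀ) = k1·k2 + k1ᵀ·k2ᵀ`. -/
theorem hgp_logical_dimension (r1 n1 r2 n2 : ℕ)
    (H1 : Matrix (Fin r1) (Fin n1) (ZMod 2))
    (H2 : Matrix (Fin r2) (Fin n2) (ZMod 2)) :
    Module.finrank (ZMod 2)
      (↥(LinearMap.ker (Matrix.fromCols (H1 ⊗ₖ (1 : Matrix (Fin n2) (Fin n2) (ZMod 2)))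
            ((1 : Matrix (Fin r1) (Fin r1) (ZMod 2)) ⊗ₖ H2ᵀ)).mulVecLin) ⧸
        (LinearMap.range (Matrix.fromCols ((1 : Matrix (Fin n1) (Fin n1) (ZMod 2)) ⊗ₖ H2)
            (H1ᵀ ⊗ₖ (1 : Matrix (Fin r2) (Fin r2) (ZMod 2))))ᵀ.mulVecLin).comap
          (LinearMap.ker (Matrix.fromCols (H1 ⊗ₖ (1 : Matrix (Fin n2) (Fin n2) (ZMod 2)))
            ((1 : Matrix (Fin r1) (Fin r1) (ZMod 2)) ⊗ₖ H2ᵀ)).mulVecLin).subtype) =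
    Module.finrank (ZMod 2) (LinearMap.ker H1.mulVecLin) * (n2 - H2.rank) +
      (r1 - H1.rank) * Module.finrank (ZMod 2) (LinearMap.ker H2ᵀ.mulVecLin) := by
  set MX := Matrix.fromCols (H1 ⊗ₖ (1 : Matrix (Fin n2) (Fin n2) (ZMod 2)))
      ((1 : Matrix (Fin r1) (Fin r1) (ZMod 2)) ⊗ₖ H2ᵀ) with hMX
  set MZ := Matrix.fromCols ((1 : Matrix (Fin n1) (Fin n1) (ZMod 2)) ⊗ₖ H2)
      (H1ᵀ ⊗ₖ (1 : Matrix (Fin r2) (Fin r2) (ZMod 2))) with hMZ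
  have hprod : MX * MZᵀ = 0 := by
    rw [hMX, hMZ, Matrix.transpose_fromCols, Matrix.fromCols_mul_fromRows,
      ← Matrix.kroneckerMap_transpose, ← Matrix.kroneckerMap_transpose,
      Matrix.transpose_one, Matrix.transpose_one, Matrix.transpose_transpose,
      ← Matrix.mul_kronecker_mul, ← Matrix.mul_kronecker_mul,
      Matrix.mul_one, Matrix.one_mul, Matrix.mul_one, Matrix.one_mul]
    ext i j
    simp [Matrix.add_apply, CharTwo.add_self_eq_zero]
  have hle : LinearMap.range MZᵀ.mulVecLin ≤ LinearMap.ker MX.mulVecLin := by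
    rintro x ⟨v, rfl⟩
    simp only [LinearMap.mem_ker, Matrix.mulVecLin_apply, Matrix.mulVec_mulVec, hprod,
      Matrix.zero_mulVec]
  have hc : Module.finrank (ZMod 2)
      ((LinearMap.range MZᵀ.mulVecLin).comap (LinearMap.ker MX.mulVecLin).subtype) = MZ.rank := by
    rw [(Submodule.comapSubtypeEquivOfLe hle).finrank_eq]
    exact Matrix.rank_transpose MZ
  have e4 : Module.finrank (ZMod 2)
      ((↥(LinearMap.ker MX.mulVecLin)) ⧸
        (LinearMap.range MZᵀ.mulVecLin).comap (LinearMap.ker MX.mulVecLin).subtype) +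
      MZ.rank = Module.finrank (ZMod 2) (LinearMap.ker MX.mulVecLin) := by
    have h := Submodule.finrank_quotient_add_finrank
      ((LinearMap.range MZᵀ.mulVecLin).comap (LinearMap.ker MX.mulVecLin).subtype)
    omega
  have e1 : MX.rank + H1.rank * H2.rank = H1.rank * n2 + r1 * H2.rank := by
    have h : MX.rank = Module.finrank (ZMod 2)
        ↥(LinearMap.range (H1 ⊗ₖ (1 : Matrix (Fin n2) (Fin n2) (ZMod 2))).mulVecLin ⊔
         LinearMap.range ((1 : Matrix (Fin r1) (Fin r1) (ZMod 2)) ⊗ₖ H2ᵀ).mulVecLin) := by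
      rw [show MX.rank = Module.finrank (ZMod 2) ↥(LinearMap.range MX.mulVecLin) from rfl]
      rw [hMX, range_fromColumns]
    have h2 := Submodule.finrank_sup_add_finrank_inf_eq (K := ZMod 2)
      (LinearMap.range (H1 ⊗ₖ (1 : Matrix (Fin n2) (Fin n2) (ZMod 2))).mulVecLin)
      (LinearMap.range ((1 : Matrix (Fin r1) (Fin r1) (ZMod 2)) ⊗ₖ H2ᵀ).mulVecLin)
    rw [range_kron_inf H1 H2ᵀ] at h2
    have h3 : Module.finrank (ZMod 2) ↥(LinearMap.range (H1 ⊗ₖ H2ᵀ).mulVecLin) =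
        H1.rank * H2.rank := by
      rw [show Module.finrank (ZMod 2) ↥(LinearMap.range (H1 ⊗ₖ H2ᵀ).mulVecLin) =
        (H1 ⊗ₖ H2ᵀ).rank from rfl, rank_kron, Matrix.rank_transpose]
    have h4 : Module.finrank (ZMod 2)
        ↥(LinearMap.range (H1 ⊗ₖ (1 : Matrix (Fin n2) (Fin n2) (ZMod 2))).mulVecLin) =
        H1.rank * n2 := by
      rw [show Module.finrank (ZMod 2)
        ↥(LinearMap.range (H1 ⊗ₖ (1 : Matrix (Fin n2) (Fin n2) (ZMod 2))).mulVecLin) =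
        (H1 ⊗ₖ (1 : Matrix (Fin n2) (Fin n2) (ZMod 2))).rank from rfl, rank_kron,
        Matrix.rank_one, Fintype.card_fin]
    have h5 : Module.finrank (ZMod 2)
        ↥(LinearMap.range ((1 : Matrix (Fin r1) (Fin r1) (ZMod 2)) ⊗ₖ H2ᵀ).mulVecLin) =
        r1 * H2.rank := by
      rw [show Module.finrank (ZMod 2)
        ↥(LinearMap.range ((1 : Matrix (Fin r1) (Fin r1) (ZMod 2)) ⊗ₖ H2ᵀ).mulVecLin) =
        ((1 : Matrix (Fin r1) (Fin r1) (ZMod 2)) ⊗ₖ H2ᵀ).rank from rfl, rank_kron,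
        Matrix.rank_one, Matrix.rank_transpose, Fintype.card_fin]
    rw [h3, h4, h5] at h2
    rw [h]
    exact h2
  have e2 : MZ.rank + H1.rank * H2.rank = n1 * H2.rank + H1.rank * r2 := by
    have h : MZ.rank = Module.finrank (ZMod 2)
        ↥(LinearMap.range ((1 : Matrix (Fin n1) (Fin n1) (ZMod 2)) ⊗ₖ H2).mulVecLin ⊔
         LinearMap.range (H1ᵀ ⊗ₖ (1 : Matrix (Fin r2) (Fin r2) (ZMod 2))).mulVecLin) := by
      rw [show MZ.rank = Module.finrank (ZMod 2) ↥(LinearMap.range MZ.mulVecLin) from rfl]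
      rw [hMZ, range_fromColumns]
    have h2 := Submodule.finrank_sup_add_finrank_inf_eq (K := ZMod 2)
      (LinearMap.range ((1 : Matrix (Fin n1) (Fin n1) (ZMod 2)) ⊗ₖ H2).mulVecLin)
      (LinearMap.range (H1ᵀ ⊗ₖ (1 : Matrix (Fin r2) (Fin r2) (ZMod 2))).mulVecLin)
    rw [inf_comm, range_kron_inf H1ᵀ H2] at h2
    have h3 : Module.finrank (ZMod 2) ↥(LinearMap.range (H1ᵀ ⊗ₖ H2).mulVecLin) =
        H1.rank * H2.rank := by
      rw [show Module.finrank (ZMod 2) ↥(LinearMap.range (H1ᵀ ⊗ₖ H2).mulVecLin) =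
        (H1ᵀ ⊗ₖ H2).rank from rfl, rank_kron, Matrix.rank_transpose]
    have h4 : Module.finrank (ZMod 2)
        ↥(LinearMap.range ((1 : Matrix (Fin n1) (Fin n1) (ZMod 2)) ⊗ₖ H2).mulVecLin) =
        n1 * H2.rank := by
      rw [show Module.finrank (ZMod 2)
        ↥(LinearMap.range ((1 : Matrix (Fin n1) (Fin n1) (ZMod 2)) ⊗ₖ H2).mulVecLin) =
        ((1 : Matrix (Fin n1) (Fin n1) (ZMod 2)) ⊗ₖ H2).rank from rfl, rank_kron,
        Matrix.rank_one, Fintype.card_fin]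
    have h5 : Module.finrank (ZMod 2)
        ↥(LinearMap.range (H1ᵀ ⊗ₖ (1 : Matrix (Fin r2) (Fin r2) (ZMod 2))).mulVecLin) =
        H1.rank * r2 := by
      rw [show Module.finrank (ZMod 2)
        ↥(LinearMap.range (H1ᵀ ⊗ₖ (1 : Matrix (Fin r2) (Fin r2) (ZMod 2))).mulVecLin) =
        (H1ᵀ ⊗ₖ (1 : Matrix (Fin r2) (Fin r2) (ZMod 2))).rank from rfl, rank_kron,
        Matrix.rank_one, Matrix.rank_transpose, Fintype.card_fin]
    rw [h3, h4, h5] at h2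
    rw [h]
    omega
  have e3 : MX.rank + Module.finrank (ZMod 2) (LinearMap.ker MX.mulVecLin) =
      n1 * n2 + r1 * r2 := by
    have h := LinearMap.finrank_range_add_finrank_ker MX.mulVecLin
    rwa [Module.finrank_pi, Fintype.card_sum, Fintype.card_prod, Fintype.card_prod,
      Fintype.card_fin, Fintype.card_fin, Fintype.card_fin, Fintype.card_fin] at h
  have e5 : H1.rank + Module.finrank (ZMod 2) (LinearMap.ker H1.mulVecLin) = n1 := by
    have h := LinearMap.finrank_range_add_finrank_ker H1.mulVecLin
    rwa [Module.finrank_pi, Fintype.card_fin] at h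
  have e6 : H2.rank + Module.finrank (ZMod 2) (LinearMap.ker H2ᵀ.mulVecLin) = r2 := by
    have h := LinearMap.finrank_range_add_finrank_ker H2ᵀ.mulVecLin
    rwa [Module.finrank_pi, Fintype.card_fin, show Module.finrank (ZMod 2)
      ↥(LinearMap.range H2ᵀ.mulVecLin) = H2.rank from Matrix.rank_transpose H2] at h
  have h7 : H1.rank ≤ r1 := by simpa using H1.rank_le_card_height
  have h8 : H2.rank ≤ n2 := by simpa using H2.rank_le_card_width
  zify [h7, h8] at e1 e2 e3 e4 e5 e6 ⊢
  linear_combination e4 + e3 - e1 - e2 + ((H2.rank : ℤ) - n2) * e5 +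
    ((H1.rank : ℤ) - r1) * e6
end
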